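/- Fix integers i ≥ 2 and u ≥ 1. There exists a polynomial P over ℂ in the variables A_{1,3}, …, A_{1,2u+1} and A_{i,2i+1}, …, A_{i,2(i+u)−2} with the following property: for every pair of power series f_1 = t^2 + Σ_{m≥3} a_{1,m} t^m and f_i = t^{2i} + Σ_{m≥2i+1} a_{i,m} t^m in ℂ⟦t⟧, the coefficient of t^{2(i+u)−1} in F*_{i,u} equals a_{i,2(i+u)−1} + P(a_{1,3}, …, a_{1,2u+1}, a_{i,2i+1}, …, a_{i,2(i+u)−2}). In particular, as a function of the coefficients of f_1 and f_i, this condition is linear with coefficient 1 in the single variable a_{i,2(i+u)−1} and depends otherwise only on coefficients of strictly smaller index. -/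

import Mathlib

/-- `FstarS f1 fi i r` is the series `F*_{i,r}` built from `f₁ = f1` and `f_i = fi`:
`F*_{i,0} = f_i` and `F*_{i,r} = F*_{i,r−1} − a(i,r−1)·f₁^{i+r−1}`, where `a(i,r)`
is the coefficient of `t^{2(i+r)}` in `F*_{i,r}`. -/
noncomputable def FstarS (f1 fi : PowerSeries ℂ) (i : ℕ) : ℕ → PowerSeries ℂ
  | 0 => fi
  | r + 1 =>
      FstarS f1 fi i r -
        PowerSeries.C (PowerSeries.coeff (2 * (i + r)) (FstarS f1 fi i r)) *
          f1 ^ (i + r)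


open Finset MvPolynomial PowerSeries

/-- Polynomial expression for the coefficient of `tᵐ` in `f1`. -/
noncomputable def cVar (p : ℕ) : MvPolynomial (ℕ ⊕ ℕ) ℂ :=
  if p < 2 then 0 else if p = 2 then 1 else X (Sum.inl p)

/-- Polynomial expression for the coefficient of `tⁿ` in `f1 ^ k`. -/
noncomputable def Qpoly : ℕ → ℕ → MvPolynomial (ℕ ⊕ ℕ) ℂ
  | 0, n => if n = 0 then 1 else 0
  | k + 1, n => ∑ p ∈ Finset.range (n + 1), cVar p * Qpoly k (n - p)

lemma qeval (k n : ℕ) (f1 fi : PowerSeries ℂ)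
    (h1 : PowerSeries.coeff 2 f1 = 1) (h2 : ∀ m, m < 2 → PowerSeries.coeff m f1 = 0) :
    PowerSeries.coeff n (f1 ^ k) =
      MvPolynomial.aeval (Sum.elim (fun m => PowerSeries.coeff m f1)
        (fun m => PowerSeries.coeff m fi)) (Qpoly k n) := by
  induction k generalizing n with
  | zero =>
      simp only [pow_zero, Qpoly, PowerSeries.coeff_one]
      split <;> simp
  | succ k IH =>
      rw [pow_succ', PowerSeries.coeff_mul, Nat.sum_antidiagonal_eq_sum_range_succ_mk]
      simp only [Qpoly, map_sum, map_mul]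
      refine Finset.sum_congr rfl fun p hp => ?_
      congr 1
      · unfold cVar
        split
        · rw [h2 p ‹_›, map_zero]
        · split
          · subst ‹p = 2›; rw [h1, map_one]
          · rw [aeval_X]; rfl
      · exact IH (n - p)

lemma qzero : ∀ k n, n < 2 * k → Qpoly k n = 0 := by
  intro k
  induction k with
  | zero => omega
  | succ k IH =>
      intro n hn
      rw [Qpoly]
      refine Finset.sum_eq_zero fun p hp => ?_
      have hp' : p ≤ n := Nat.lt_succ_iff.mp (Finset.mem_range.mp hp)
      rcases lt_or_ge p 2 with h | h
      · have : cVar p = 0 := by unfold cVar; simp [h]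
        rw [this, zero_mul]
      · rw [IH (n - p) (by omega), mul_zero]

lemma qsupp : ∀ k n, Qpoly k n ∈
    MvPolynomial.supported ℂ ((Sum.inl '' Set.Icc 3 (n - 2 * k + 2) : Set (ℕ ⊕ ℕ))) := by
  intro k
  induction k with
  | zero =>
      intro n
      rw [Qpoly]
      split
      · exact Subalgebra.one_mem _
      · exact Subalgebra.zero_mem _
  | succ k IH =>
      intro n
      rw [Qpoly]
      refine Subalgebra.sum_mem _ fun p hp => ?_
      have hp' : p ≤ n := by simpa using Nat.lt_succ_iff.mp (Finset.mem_range.mp hp)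
      rcases lt_or_ge p 2 with h2 | h2
      · have : cVar p = 0 := by unfold cVar; simp [h2]
        rw [this, zero_mul]; exact Subalgebra.zero_mem _
      rcases lt_or_ge (n - p) (2 * k) with hnp | hnp
      · rw [qzero k (n - p) hnp, mul_zero]; exact Subalgebra.zero_mem _
      have hnk : 2 * k + p ≤ n := by omega
      refine Subalgebra.mul_mem _ ?_ ?_
      · unfold cVar
        rw [if_neg (by omega)]
        split
        · exact Subalgebra.one_mem _
        · rw [X_mem_supported]
          exact ⟨p, Set.mem_Icc.mpr ⟨by omega, by omega⟩, rfl⟩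
      · refine MvPolynomial.supported_mono (Set.image_mono (Set.Icc_subset_Icc_right ?_)) (IH (n - p))
        omega

lemma fstar_eq (f1 fi : PowerSeries ℂ) (i : ℕ) : ∀ r,
    FstarS f1 fi i r = fi - ∑ s ∈ Finset.range r,
      PowerSeries.C (PowerSeries.coeff (2 * (i + s)) (FstarS f1 fi i s)) * f1 ^ (i + s) := by
  intro r
  induction r with
  | zero => simp [FstarS]
  | succ r IH =>
      rw [FstarS, Finset.sum_range_succ, IH, sub_add_eq_sub_sub]

lemma lemB (i : ℕ) : ∀ r, ∃ A : MvPolynomial (ℕ ⊕ ℕ) ℂ,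
    A ∈ MvPolynomial.supported ℂ
      ((Sum.inl '' Set.Icc 3 (2 * r + 2)) ∪ (Sum.inr '' Set.Icc (2 * i + 1) (2 * (i + r)))) ∧
    ∀ f1 fi : PowerSeries ℂ,
      PowerSeries.coeff 2 f1 = 1 → (∀ m, m < 2 → PowerSeries.coeff m f1 = 0) →
      PowerSeries.coeff (2 * i) fi = 1 →
      PowerSeries.coeff (2 * (i + r)) (FstarS f1 fi i r) =
        MvPolynomial.aeval (Sum.elim (fun m => PowerSeries.coeff m f1)
          (fun m => PowerSeries.coeff m fi)) A := by
  intro r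
  induction r using Nat.strong_induction_on with
  | _ r IH =>
    match r with
    | 0 =>
        refine ⟨1, Subalgebra.one_mem _, fun f1 fi h1 h2 h3 => ?_⟩
        simpa [FstarS] using h3
    | r + 1 =>
        have key : ∀ s, ∃ A : MvPolynomial (ℕ ⊕ ℕ) ℂ, s < r + 1 →
            (A ∈ MvPolynomial.supported ℂ
              ((Sum.inl '' Set.Icc 3 (2 * s + 2)) ∪
                (Sum.inr '' Set.Icc (2 * i + 1) (2 * (i + s)))) ∧
            ∀ f1 fi : PowerSeries ℂ,
              PowerSeries.coeff 2 f1 = 1 → (∀ m, m < 2 → PowerSeries.coeff m f1 = 0) →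
              PowerSeries.coeff (2 * i) fi = 1 →
              PowerSeries.coeff (2 * (i + s)) (FstarS f1 fi i s) =
                MvPolynomial.aeval (Sum.elim (fun m => PowerSeries.coeff m f1)
                  (fun m => PowerSeries.coeff m fi)) A) := by
          intro s
          by_cases hs : s < r + 1
          · exact (IH s hs).imp fun A h _ => h
          · exact ⟨0, fun h => absurd h hs⟩
        choose A hA using key
        refine ⟨X (Sum.inr (2 * (i + (r + 1)))) -
          ∑ s ∈ Finset.range (r + 1), A s * Qpoly (i + s) (2 * (i + (r + 1))), ?_, ?_⟩
        · refine Subalgebra.sub_mem _ ?_ (Subalgebra.sum_mem _ fun s hs => ?_)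
          · rw [X_mem_supported]
            exact Or.inr ⟨2 * (i + (r + 1)), Set.mem_Icc.mpr ⟨by omega, by omega⟩, rfl⟩
          · have hs' : s < r + 1 := Finset.mem_range.mp hs
            refine Subalgebra.mul_mem _ ?_ ?_
            · refine MvPolynomial.supported_mono ?_ ((hA s hs').1)
              refine Set.union_subset_union (Set.image_mono ?_) (Set.image_mono ?_)
              · exact Set.Icc_subset_Icc_right (by omega)
              · exact Set.Icc_subset_Icc_right (by omega)
            · refine MvPolynomial.supported_mono ?_ (qsupp (i + s) (2 * (i + (r + 1))))
              refine Set.subset_union_of_subset_left (Set.image_mono ?_) _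
              exact Set.Icc_subset_Icc_right (by omega)
        · intro f1 fi h1 h2 h3
          rw [fstar_eq f1 fi i (r + 1), map_sub, map_sum, map_sub, map_sum, aeval_X]
          simp only [Sum.elim_inr]
          congr 1
          · refine Finset.sum_congr rfl fun s hs => ?_
            have hs' : s < r + 1 := Finset.mem_range.mp hs
            rw [PowerSeries.coeff_C_mul, map_mul, ← (hA s hs').2 f1 fi h1 h2 h3,
              ← qeval (i + s) (2 * (i + (r + 1))) f1 fi h1 h2]


/-- for fixed `i ≥ 2` and `u ≥ 1` there is a polynomial `P` over `ℂ`
in the variables `A_{1,3},…,A_{1,2u+1}` (encoded `Sum.inl m`) and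
`A_{i,2i+1},…,A_{i,2(i+u)−2}` (encoded `Sum.inr m`) such that for all
`f₁ = t² + Σ_{m≥3} a_{1,m} tᵐ` and `f_i = t^{2i} + Σ_{m≥2i+1} a_{i,m} tᵐ`, the
coefficient of `t^{2(i+u)−1}` in `F*_{i,u}` equals
`a_{i,2(i+u)−1} + P(a_{1,3},…,a_{1,2u+1}, a_{i,2i+1},…,a_{i,2(i+u)−2})`. -/
theorem stmt_13 (i u : ℕ) (hi : 2 ≤ i) (hu : 1 ≤ u) :
    ∃ P : MvPolynomial (ℕ ⊕ ℕ) ℂ,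
      (P.vars : Set (ℕ ⊕ ℕ)) ⊆
        (Sum.inl '' Set.Icc 3 (2 * u + 1)) ∪
          (Sum.inr '' Set.Icc (2 * i + 1) (2 * (i + u) - 2)) ∧
      ∀ f1 fi : PowerSeries ℂ,
        PowerSeries.coeff 2 f1 = 1 → (∀ m, m < 2 → PowerSeries.coeff m f1 = 0) →
        PowerSeries.coeff (2 * i) fi = 1 → (∀ m, m < 2 * i → PowerSeries.coeff m fi = 0) →
        PowerSeries.coeff (2 * (i + u) - 1) (FstarS f1 fi i u) =
          PowerSeries.coeff (2 * (i + u) - 1) fi +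
            MvPolynomial.aeval
              (Sum.elim (fun m => PowerSeries.coeff m f1)
                (fun m => PowerSeries.coeff m fi)) P := by
  choose A hAsupp hAeval using lemB i
  set N := 2 * (i + u) - 1 with hN
  refine ⟨-(∑ r ∈ Finset.range u, A r * Qpoly (i + r) N), ?_, ?_⟩
  · rw [← MvPolynomial.mem_supported]
    refine Subalgebra.neg_mem _ (Subalgebra.sum_mem _ fun r hr => ?_)
    have hr' : r < u := Finset.mem_range.mp hr
    refine Subalgebra.mul_mem _ ?_ ?_
    · refine MvPolynomial.supported_mono ?_ (hAsupp r)
      refine Set.union_subset_union (Set.image_mono ?_) (Set.image_mono ?_)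
      · exact Set.Icc_subset_Icc_right (by omega)
      · exact Set.Icc_subset_Icc_right (by omega)
    · refine MvPolynomial.supported_mono ?_ (qsupp (i + r) N)
      refine Set.subset_union_of_subset_left (Set.image_mono ?_) _
      exact Set.Icc_subset_Icc_right (by omega)
  · intro f1 fi h1 h2 h3 h4
    rw [fstar_eq f1 fi i u, map_sub, map_neg, ← sub_eq_add_neg]
    congr 1
    rw [map_sum, map_sum]
    refine Finset.sum_congr rfl fun r hr => ?_
    rw [PowerSeries.coeff_C_mul, map_mul, ← hAeval r f1 fi h1 h2 h3,
      ← qeval (i + r) N f1 fi h1 h2]
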